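/- Let ρ > 0, ε > 0, V > 0, and p, c, V' ∈ ℝ. For each β > 0 let s*(β) be the unique s ∈ (0, ρ) with (ρ − s)(ε + sV) = β s V. Define the normalized listing-side bias B_LR(β) := (p − c)·(−s*(β)²·V·V'·(ε + s*(β)·V)) / (((ε + s*(β)·V) + β·V)·((s*(β)·V + ε)² + β·V·ε)) and the normalized customer-side bias B_CR(β) := −(p − c)·β·ε²·V·V'·s*(β) / ((V·s*(β) + ε)²·((s*(β)·V + ε)² + β·V·ε)). Then as β → 0⁺, B_CR(β) → 0 while B_LR(β) → −(p − c)·ρ²·V·V'/(ε + ρV)²; that is, in the demand-constrained limit the customer-side experiment is unbiased while the listing-side experiment has nonvanishing bias. -/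

import Mathlib

open Filter Topology

/-- in the demand-constrained limit β → 0⁺, the customer-side
bias vanishes while the listing-side bias does not. -/
theorem bias_limits_beta_zero
    (ρ ε V : ℝ) (p c V' : ℝ) (hρ : 0 < ρ) (hε : 0 < ε) (hV : 0 < V)
    (s : ℝ → ℝ)
    (hs : ∀ β : ℝ, 0 < β →
      s β ∈ Set.Ioo 0 ρ ∧ (ρ - s β) * (ε + s β * V) = β * s β * V) :
    Tendsto
        (fun β =>
          -((p - c) * β * ε ^ 2 * V * V' * s β) /
            ((V * s β + ε) ^ 2 * ((s β * V + ε) ^ 2 + β * V * ε)))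
        (𝓝[>] 0) (𝓝 0) ∧
      Tendsto
        (fun β =>
          (p - c) * (-(s β ^ 2) * V * V' * (ε + s β * V)) /
            (((ε + s β * V) + β * V) * ((s β * V + ε) ^ 2 + β * V * ε)))
        (𝓝[>] 0)
        (𝓝 (-((p - c) * ρ ^ 2 * V * V') / (ε + ρ * V) ^ 2)) := by
  have hmem : ∀ᶠ β in 𝓝[>] (0:ℝ), 0 < β := self_mem_nhdsWithin
  -- lower bound: s β ≥ ρ - β * ρ * V / ε
  have hlow : ∀ β : ℝ, 0 < β → ρ - β * ρ * V / ε ≤ s β := by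
    intro β hβ
    obtain ⟨⟨hs0, hsρ⟩, heq⟩ := hs β hβ
    have hden : 0 < ε + s β * V := by positivity
    have h1 : ρ - s β = β * s β * V / (ε + s β * V) := by
      field_simp
      linarith [heq]
    have h2 : β * s β * V / (ε + s β * V) ≤ β * ρ * V / ε := by
      apply div_le_div₀ (by positivity)
      · nlinarith [mul_pos (mul_pos hβ hV) (sub_pos.2 hsρ)]
      · exact hε
      · nlinarith
    nlinarith [h1 ▸ h2]
  have hup : ∀ β : ℝ, 0 < β → s β ≤ ρ := fun β hβ => le_of_lt (hs β hβ).1.2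
  have hβ0 : Tendsto (fun β : ℝ => β) (𝓝[>] 0) (𝓝 0) :=
    tendsto_id.mono_left nhdsWithin_le_nhds
  have hlowlim : Tendsto (fun β : ℝ => ρ - β * ρ * V / ε) (𝓝[>] 0) (𝓝 ρ) := by
    have : Tendsto (fun β : ℝ => ρ - β * ρ * V / ε) (𝓝[>] 0) (𝓝 (ρ - 0 * ρ * V / ε)) := by
      apply Tendsto.sub tendsto_const_nhds
      exact ((hβ0.mul_const ρ).mul_const V).div_const ε
    simpa using this
  have hsρ : Tendsto s (𝓝[>] 0) (𝓝 ρ) := by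
    apply tendsto_of_tendsto_of_tendsto_of_le_of_le' hlowlim tendsto_const_nhds
    · exact hmem.mono fun β hβ => hlow β hβ
    · exact hmem.mono fun β hβ => hup β hβ
  have hden2 : Tendsto (fun β => (s β * V + ε) ^ 2 + β * V * ε) (𝓝[>] 0)
      (𝓝 ((ρ * V + ε) ^ 2)) := by
    have : Tendsto (fun β => (s β * V + ε) ^ 2 + β * V * ε) (𝓝[>] 0)
        (𝓝 ((ρ * V + ε) ^ 2 + 0 * V * ε)) :=
      (((hsρ.mul_const V).add_const ε).pow 2).add ((hβ0.mul_const V).mul_const ε)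
    simpa using this
  constructor
  · -- CR
    have hnum : Tendsto (fun β => -((p - c) * β * ε ^ 2 * V * V' * s β)) (𝓝[>] 0)
        (𝓝 (-((p - c) * 0 * ε ^ 2 * V * V' * ρ))) := by
      exact (((((tendsto_const_nhds.mul hβ0).mul_const (ε^2)).mul_const V).mul_const V').mul hsρ).neg
    have hden : Tendsto (fun β => (V * s β + ε) ^ 2 * ((s β * V + ε) ^ 2 + β * V * ε))
        (𝓝[>] 0) (𝓝 ((V * ρ + ε) ^ 2 * ((ρ * V + ε) ^ 2))) :=
      (((tendsto_const_nhds.mul hsρ).add_const ε).pow 2).mul hden2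
    have hD : (V * ρ + ε) ^ 2 * ((ρ * V + ε) ^ 2) ≠ 0 := by positivity
    have := hnum.div hden hD
    rw [show (-((p - c) * 0 * ε ^ 2 * V * V' * ρ)) / ((V * ρ + ε) ^ 2 * ((ρ * V + ε) ^ 2)) = 0 by simp] at this
    exact this
  · -- LR
    have hnum : Tendsto (fun β => (p - c) * (-(s β ^ 2) * V * V' * (ε + s β * V))) (𝓝[>] 0)
        (𝓝 ((p - c) * (-(ρ ^ 2) * V * V' * (ε + ρ * V)))) := by
      exact tendsto_const_nhds.mul
        (((((hsρ.pow 2).neg.mul_const V).mul_const V').mul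
          (tendsto_const_nhds.add (hsρ.mul_const V))))
    have hden : Tendsto (fun β => ((ε + s β * V) + β * V) * ((s β * V + ε) ^ 2 + β * V * ε))
        (𝓝[>] 0) (𝓝 ((ε + ρ * V + 0 * V) * ((ρ * V + ε) ^ 2))) :=
      ((tendsto_const_nhds.add (hsρ.mul_const V)).add (hβ0.mul_const V)).mul hden2
    have hD : (ε + ρ * V + 0 * V) * ((ρ * V + ε) ^ 2) ≠ 0 := by
      simp only [zero_mul, add_zero]; positivity
    have h := hnum.div hden hD
    have heq : (p - c) * (-(ρ ^ 2) * V * V' * (ε + ρ * V)) /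
        ((ε + ρ * V + 0 * V) * ((ρ * V + ε) ^ 2)) =
        -((p - c) * ρ ^ 2 * V * V') / (ε + ρ * V) ^ 2 := by
      have hne : ε + ρ * V ≠ 0 := by positivity
      field_simp
      ring
    rwa [heq] at h
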